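/- For every real number α ≠ 0, every T > 0, and every digit ℓ ∈ {1,...,9}, the Lebesgue measure of the set {t ∈ [0,T] : the leading decimal digit of e^{αt} equals ℓ}, divided by T, differs from log₁₀(1 + 1/ℓ) by strictly less than 1/(|α|T). -/

import Mathlib

open MeasureTheory Filter Set
open scoped Classical

/-- Base-`b` significand: `S_b(x) ∈ [1,b)` with `|x| = S_b(x)·b^k`; `S_b(0)=0`. -/
noncomputable def significand (b : ℕ) (x : ℝ) : ℝ :=
  if x = 0 then 0 else |x| / (b : ℝ) ^ (Int.log b |x|)

/-- `f` is `b`-Benford. -/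
noncomputable def IsBenford (b : ℕ) (f : ℝ → ℝ) : Prop :=
  ∀ s : ℝ, 1 ≤ s → s < (b : ℝ) →
    Tendsto (fun T : ℝ =>
        (volume {t : ℝ | 0 ≤ t ∧ t ≤ T ∧ significand b (f t) ≤ s}).toReal / T)
      atTop (nhds (Real.logb b s))

/-- A subset of the circle `ℝ/ℤ` is an arc if it is the image of an interval. -/
def IsArc (J : Set UnitAddCircle) : Prop :=
  ∃ a c : ℝ, J = (fun x : ℝ => (x : UnitAddCircle)) '' Set.Ico a c

/-- `f` is continuously uniformly distributed mod 1. -/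
noncomputable def CUDMod1 (f : ℝ → ℝ) : Prop :=
  ∀ J : Set UnitAddCircle, IsArc J →
    Tendsto (fun T : ℝ =>
        (volume {t : ℝ | 0 ≤ t ∧ t ≤ T ∧ ((f t : UnitAddCircle) ∈ J)}).toReal / T)
      atTop (nhds ((volume J).toReal))

/-- A sequence (indexed from 1) is uniformly distributed mod 1. -/
noncomputable def UDMod1 (x : ℕ → ℝ) : Prop :=
  ∀ J : Set UnitAddCircle, IsArc J →
    Tendsto (fun N : ℕ =>
        ((Finset.Icc 1 N).filter (fun n => ((x n : UnitAddCircle) ∈ J))).card / (N : ℝ))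
      atTop (nhds ((volume J).toReal))

/-- The set `Δ_W` associated with `W ⊆ ℂ`. -/
noncomputable def deltaSet (W : Set ℂ) : Set ℝ :=
  {x | ∃ z ∈ W, ∃ w ∈ W, x = 1 + (Complex.arg z - Complex.arg w) / (2 * Real.pi)}

/-- `W ⊆ ℂ` is `b`-nonresonant. -/
noncomputable def BNonresonant (b : ℕ) (W : Set ℂ) : Prop :=
  ∀ r : ℝ, 0 < r → (W ∩ {z | ‖z‖ = r}).Nonempty →
    (deltaSet (W ∩ {z | ‖z‖ = r}) ∩ Set.range ((↑) : ℚ → ℝ) = {1}) ∧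
    Real.logb b r ∉ Submodule.span ℚ (deltaSet (W ∩ {z | ‖z‖ = r}))

/-- `Z ⊆ ℂ` is exponentially `b`-nonresonant. -/
noncomputable def ExpBNonresonant (b : ℕ) (Z : Set ℂ) : Prop :=
  ∃ t : ℝ, 0 ≤ t ∧ BNonresonant b ((fun z => Complex.exp (t * z)) '' Z)

/-- The spectrum (set of complex eigenvalues) of a real square matrix. -/
noncomputable def realSpectrum {d : ℕ} (A : Matrix (Fin d) (Fin d) ℝ) : Set ℂ :=
  spectrum ℂ (A.map (algebraMap ℝ ℂ))

theorem fract_mem_Ico_iff' (c d : ℝ) (hc : 0 ≤ c) (hd : d ≤ 1) (x : ℝ) :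
    Int.fract x ∈ Ico c d ↔ x ∈ ⋃ n : ℤ, Ico ((n:ℝ)+c) ((n:ℝ)+d) := by
  have hfr : Int.fract x = x - ⌊x⌋ := (Int.self_sub_floor x).symm
  constructor
  · rintro ⟨h1, h2⟩
    rw [hfr] at h1 h2
    exact mem_iUnion.2 ⟨⌊x⌋, by constructor <;> [linarith; linarith]⟩
  · rintro h
    obtain ⟨n, hn1, hn2⟩ := mem_iUnion.1 h
    have hfl : ⌊x⌋ = n := by
      apply Int.floor_eq_iff.2
      constructor <;> [linarith; linarith]
    rw [hfr, hfl]
    constructor <;> [linarith; linarith]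

theorem count_upper' (a b c d : ℝ) (hab : a ≤ b) (hcd : c ≤ d) :
    volume (Icc a b ∩ ⋃ n : ℤ, Ico ((n:ℝ)+c) ((n:ℝ)+d))
      ≤ ENNReal.ofReal ((b - a + 1 + (d - c)) * (d - c)) := by
  set s : Finset ℤ := Finset.Icc ⌈a - d⌉ ⌊b - c⌋ with hs
  have hsub : Icc a b ∩ (⋃ n : ℤ, Ico ((n:ℝ)+c) ((n:ℝ)+d))
      ⊆ ⋃ n ∈ s, Ico ((n:ℝ)+c) ((n:ℝ)+d) := by
    rintro x ⟨⟨hxa, hxb⟩, hx⟩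
    obtain ⟨n, hn1, hn2⟩ := mem_iUnion.1 hx
    have hns : n ∈ s := by
      rw [hs, Finset.mem_Icc]
      exact ⟨Int.ceil_le.2 (by linarith), Int.le_floor.2 (by linarith)⟩
    exact mem_biUnion hns ⟨hn1, hn2⟩
  calc volume (Icc a b ∩ ⋃ n : ℤ, Ico ((n:ℝ)+c) ((n:ℝ)+d))
      ≤ volume (⋃ n ∈ s, Ico ((n:ℝ)+c) ((n:ℝ)+d)) := measure_mono hsub
    _ ≤ ∑ n ∈ s, volume (Ico ((n:ℝ)+c) ((n:ℝ)+d)) := measure_biUnion_finset_le s _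
    _ = s.card • ENNReal.ofReal (d - c) := by
        simp only [Real.volume_Ico, add_sub_add_left_eq_sub, Finset.sum_const]
    _ ≤ ENNReal.ofReal ((b - a + 1 + (d - c)) * (d - c)) := by
        rw [nsmul_eq_mul, ← ENNReal.ofReal_natCast, ← ENNReal.ofReal_mul (by positivity)]
        apply ENNReal.ofReal_le_ofReal
        apply mul_le_mul_of_nonneg_right _ (by linarith)
        have h1 : (s.card : ℝ) = max ((⌊b - c⌋ : ℝ) + 1 - ⌈a - d⌉) 0 := by
          rw [hs, Int.card_Icc]
          rw [← Int.cast_natCast, Int.toNat_eq_max, Int.cast_max]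
          push_cast
          ring_nf
        rw [h1]
        apply max_le _ (by linarith)
        have := Int.floor_le (b - c)
        have := Int.le_ceil (a - d)
        linarith

theorem count_lower' (a b c d : ℝ) (hc : 0 ≤ c) (hcd : c ≤ d) (hd : d ≤ 1) :
    ENNReal.ofReal ((b - a - 1 - (d - c)) * (d - c))
      ≤ volume (Icc a b ∩ ⋃ n : ℤ, Ico ((n:ℝ)+c) ((n:ℝ)+d)) := by
  set s : Finset ℤ := Finset.Icc ⌈a - c⌉ ⌊b - d⌋ with hs
  have hsub : (⋃ n ∈ s, Ico ((n:ℝ)+c) ((n:ℝ)+d))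
      ⊆ Icc a b ∩ ⋃ n : ℤ, Ico ((n:ℝ)+c) ((n:ℝ)+d) := by
    rintro x hx
    obtain ⟨n, hns, hn1, hn2⟩ := mem_iUnion₂.1 hx
    rw [hs, Finset.mem_Icc] at hns
    have h1 : a - c ≤ (n:ℝ) := by exact_mod_cast Int.ceil_le.1 hns.1
    have h2 : (n:ℝ) ≤ b - d := by exact_mod_cast Int.le_floor.1 hns.2
    exact ⟨⟨by linarith, by linarith⟩, mem_iUnion.2 ⟨n, hn1, hn2⟩⟩
  have hdisj : Set.PairwiseDisjoint (↑s : Set ℤ)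
      (fun n : ℤ => Ico ((n:ℝ)+c) ((n:ℝ)+d)) := by
    intro m _ n _ hmn
    rcases Ne.lt_or_gt hmn with h | h
    · rw [Function.onFun, Set.Ico_disjoint_Ico]
      have : (m:ℝ) + 1 ≤ n := by exact_mod_cast h
      calc min ((m:ℝ)+d) ((n:ℝ)+d) ≤ (m:ℝ)+d := min_le_left _ _
        _ ≤ (n:ℝ)+c := by linarith
        _ ≤ max ((m:ℝ)+c) ((n:ℝ)+c) := le_max_right _ _
    · rw [Function.onFun, Set.Ico_disjoint_Ico]
      have : (n:ℝ) + 1 ≤ m := by exact_mod_cast h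
      calc min ((m:ℝ)+d) ((n:ℝ)+d) ≤ (n:ℝ)+d := min_le_right _ _
        _ ≤ (m:ℝ)+c := by linarith
        _ ≤ max ((m:ℝ)+c) ((n:ℝ)+c) := le_max_left _ _
  have hvol : volume (⋃ n ∈ s, Ico ((n:ℝ)+c) ((n:ℝ)+d))
      = s.card • ENNReal.ofReal (d - c) := by
    rw [measure_biUnion_finset hdisj (fun n _ => measurableSet_Ico)]
    simp only [Real.volume_Ico, add_sub_add_left_eq_sub, Finset.sum_const]
  calc ENNReal.ofReal ((b - a - 1 - (d - c)) * (d - c))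
      ≤ s.card • ENNReal.ofReal (d - c) := by
        rw [nsmul_eq_mul, ← ENNReal.ofReal_natCast, ← ENNReal.ofReal_mul (by positivity)]
        apply ENNReal.ofReal_le_ofReal
        apply mul_le_mul_of_nonneg_right _ (by linarith)
        have h1 : (s.card : ℝ) = max ((⌊b - d⌋ : ℝ) + 1 - ⌈a - c⌉) 0 := by
          rw [hs, Int.card_Icc]
          rw [← Int.cast_natCast, Int.toNat_eq_max, Int.cast_max]
          push_cast
          ring_nf
        rw [h1]
        apply le_max_of_le_left
        have := Int.lt_floor_add_one (b - d)
        have := Int.ceil_lt_add_one (a - c)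
        linarith
  _ = volume (⋃ n ∈ s, Ico ((n:ℝ)+c) ((n:ℝ)+d)) := hvol.symm
  _ ≤ volume (Icc a b ∩ ⋃ n : ℤ, Ico ((n:ℝ)+c) ((n:ℝ)+d)) := measure_mono hsub

theorem sig_floor_iff' (α : ℝ) (ℓ : ℕ) (h1 : 1 ≤ ℓ) (t : ℝ) :
    ⌊significand 10 (Real.exp (α * t))⌋ = (ℓ : ℤ) ↔
      Int.fract ((α / Real.log 10) * t)
        ∈ Ico (Real.logb 10 ℓ) (Real.logb 10 (ℓ+1)) := by
  have hx : (0:ℝ) < Real.exp (α * t) := Real.exp_pos _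
  have h10 : (1:ℝ) < 10 := by norm_num
  have hL : Real.logb 10 (Real.exp (α * t)) = (α / Real.log 10) * t := by
    rw [Real.logb, Real.log_exp]; ring
  set L := (α / Real.log 10) * t with hLdef
  have hsig : significand 10 (Real.exp (α * t)) = (10:ℝ) ^ (Int.fract L) := by
    rw [significand, if_neg hx.ne', abs_of_pos hx]
    have hlog : Int.log 10 (Real.exp (α * t)) = ⌊L⌋ := by
      rw [← Real.floor_logb_natCast hx.le]
      norm_num [hL]
    rw [hlog, show ((10:ℕ):ℝ) = (10:ℝ) by norm_num]
    have : Real.exp (α * t) = (10:ℝ) ^ L := by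
      rw [← hL, Real.rpow_logb (by norm_num) (by norm_num) hx]
    rw [this, ← Real.rpow_intCast (10:ℝ) ⌊L⌋, ← Real.rpow_sub (by norm_num),
      Int.self_sub_floor]
  rw [hsig]
  have hl0 : (0:ℝ) < ℓ := by exact_mod_cast h1
  have hc : (ℓ:ℝ) = (10:ℝ) ^ Real.logb 10 (ℓ:ℝ) :=
    (Real.rpow_logb (by norm_num) (by norm_num) hl0).symm
  have hdpos : (0:ℝ) < (ℓ:ℝ) + 1 := by positivity
  have hdd : ((ℓ:ℝ) + 1) = (10:ℝ) ^ Real.logb 10 ((ℓ:ℝ)+1) :=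
    (Real.rpow_logb (by norm_num) (by norm_num) hdpos).symm
  rw [Int.floor_eq_iff, mem_Ico]
  push_cast
  constructor
  · rintro ⟨ha, hb⟩
    refine ⟨?_, ?_⟩
    · rw [hc] at ha
      exact (Real.rpow_le_rpow_left_iff h10).1 ha
    · rw [hdd] at hb
      exact (Real.rpow_lt_rpow_left_iff h10).1 hb
  · rintro ⟨ha, hb⟩
    refine ⟨?_, ?_⟩
    · rw [hc]
      exact (Real.rpow_le_rpow_left_iff h10).2 ha
    · rw [hdd]
      exact (Real.rpow_lt_rpow_left_iff h10).2 hb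


set_option maxHeartbeats 1000000 in
/-- explicit error bound for the first-digit law of `e^{αt}`. -/
theorem exp_leadingDigit_bound (α : ℝ) (hα : α ≠ 0) (T : ℝ) (hT : 0 < T)
    (ℓ : ℕ) (h1 : 1 ≤ ℓ) (h9 : ℓ ≤ 9) :
    |(volume {t : ℝ | 0 ≤ t ∧ t ≤ T ∧
        ⌊significand 10 (Real.exp (α * t))⌋ = (ℓ : ℤ)}).toReal / T
      - Real.logb 10 (1 + 1 / (ℓ : ℝ))| < 1 / (|α| * T) := by
  have hlog10 : (2:ℝ) < Real.log 10 := by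
    rw [Real.lt_log_iff_exp_lt (by norm_num)]
    have h := Real.exp_one_lt_d9
    have h2 : Real.exp 2 = Real.exp 1 * Real.exp 1 := by
      rw [← Real.exp_add]; norm_num
    nlinarith [Real.exp_pos 1]
  have hlog10' : (0:ℝ) < Real.log 10 := by linarith
  set β := α / Real.log 10 with hβdef
  have hβ : β ≠ 0 := div_ne_zero hα (by positivity)
  have hβabs : |β| = |α| / Real.log 10 := by
    rw [hβdef, abs_div, abs_of_pos hlog10']
  have hβpos : 0 < |β| := abs_pos.2 hβ
  have hαpos : 0 < |α| := abs_pos.2 hα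
  set c := Real.logb 10 (ℓ:ℝ) with hcdef
  set d := Real.logb 10 ((ℓ:ℝ)+1) with hddef
  have hl0 : (0:ℝ) < ℓ := by exact_mod_cast h1
  have hl1 : (1:ℝ) ≤ ℓ := by exact_mod_cast h1
  have hl9 : (ℓ:ℝ) ≤ 9 := by exact_mod_cast h9
  have hc0 : 0 ≤ c := Real.logb_nonneg (by norm_num) hl1
  have hcd : c ≤ d := Real.logb_le_logb_of_le (by norm_num) hl0 (by linarith)
  have hd1 : d ≤ 1 := by
    have : Real.logb 10 ((ℓ:ℝ)+1) ≤ Real.logb 10 10 :=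
      Real.logb_le_logb_of_le (by norm_num) (by linarith) (by linarith)
    simpa [Real.logb_self_eq_one] using this
  set δ := d - c with hδdef
  have hδ0 : 0 ≤ δ := by linarith
  have hδtarget : Real.logb 10 (1 + 1 / (ℓ:ℝ)) = δ := by
    rw [hδdef, hddef, hcdef, ← Real.logb_div (by linarith) (by linarith)]
    congr 1
    field_simp
  -- δ * log 10 = log (1 + 1/ℓ) ≤ log 2
  have hδlog : δ * Real.log 10 = Real.log (1 + 1 / (ℓ:ℝ)) := by
    rw [← hδtarget, Real.logb, div_mul_cancel₀ _ (by positivity)]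
  have hlogle : Real.log (1 + 1 / (ℓ:ℝ)) ≤ Real.log 2 := by
    apply Real.log_le_log (by positivity)
    have : 1 / (ℓ:ℝ) ≤ 1 := by
      rw [div_le_one hl0]; exact hl1
    linarith
  have hlog2 : Real.log 2 < 0.6931471808 := Real.log_two_lt_d9
  have hδle : δ ≤ Real.log 2 / 2 := by
    rw [le_div_iff₀ (by norm_num)]
    have h0 : 0 ≤ Real.log (1 + 1 / (ℓ:ℝ)) := Real.log_nonneg (le_add_of_nonneg_right (by positivity))
    nlinarith
  have hlog2pos : (0:ℝ) < Real.log 2 := Real.log_pos (by norm_num)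
  -- key numeric inequality
  have hkey : (1 + δ) * δ * Real.log 10 < 1 := by
    have h5 : δ * Real.log 10 < 0.6931471808 := by
      rw [hδlog]; linarith
    have h6 : δ < 0.3465735904 := by nlinarith
    have h5' : 0 ≤ δ * Real.log 10 := by positivity
    have h7 : δ * (δ * Real.log 10) ≤ 0.3465735904 * 0.6931471808 :=
      mul_le_mul h6.le h5.le h5' (by norm_num)
    nlinarith
  -- set description
  set U := ⋃ n : ℤ, Ico ((n:ℝ)+c) ((n:ℝ)+d) with hUdef
  set a := min 0 (β * T) with hadef
  set b := max 0 (β * T) with hbdef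
  have hab : a ≤ b := min_le_max
  have hba : b - a = |β| * T := by
    rw [hadef, hbdef]
    rcases le_or_gt 0 (β * T) with h | h
    · rw [min_eq_left h, max_eq_right h, sub_zero, ← abs_of_nonneg h, abs_mul,
        abs_of_pos hT]
    · rw [min_eq_right h.le, max_eq_left h.le, zero_sub, ← abs_of_neg h, abs_mul,
        abs_of_pos hT]
  clear_value β c d δ U a b
  have hIcc : ∀ t : ℝ, (0 ≤ t ∧ t ≤ T) ↔ (a ≤ β * t ∧ β * t ≤ b) := by
    intro t
    rcases lt_or_gt_of_ne hβ with h | h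
    · rw [hadef, hbdef, min_eq_right (by nlinarith), max_eq_left (by nlinarith)]
      constructor
      · rintro ⟨h0, h1⟩; exact ⟨by nlinarith, by nlinarith⟩
      · rintro ⟨h0, h1⟩; exact ⟨by nlinarith, by nlinarith⟩
    · rw [hadef, hbdef, min_eq_left (by nlinarith), max_eq_right (by nlinarith)]
      constructor
      · rintro ⟨h0, h1⟩; exact ⟨by nlinarith, by nlinarith⟩
      · rintro ⟨h0, h1⟩; exact ⟨by nlinarith, by nlinarith⟩
  have hset : {t : ℝ | 0 ≤ t ∧ t ≤ T ∧
        ⌊significand 10 (Real.exp (α * t))⌋ = (ℓ : ℤ)}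
      = (fun t => β * t) ⁻¹' (Icc a b ∩ U) := by
    ext t
    simp only [mem_setOf_eq, mem_preimage, mem_inter_iff, mem_Icc]
    rw [sig_floor_iff' α ℓ h1 t, ← hβdef, ← hcdef, ← hddef,
      fract_mem_Ico_iff' c d hc0 hd1 (β * t), ← hUdef]
    constructor
    · rintro ⟨h0, h1', h2⟩
      exact ⟨(hIcc t).1 ⟨h0, h1'⟩, h2⟩
    · rintro ⟨hmem, h2⟩
      obtain ⟨h0, h1'⟩ := (hIcc t).2 hmem
      exact ⟨h0, h1', h2⟩
  -- measure computation
  have hMU : MeasurableSet U := by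
    rw [hUdef]; exact MeasurableSet.iUnion (fun n => measurableSet_Ico)
  have hvolA : volume ({t : ℝ | 0 ≤ t ∧ t ≤ T ∧
        ⌊significand 10 (Real.exp (α * t))⌋ = (ℓ : ℤ)})
      = ENNReal.ofReal |β⁻¹| * volume (Icc a b ∩ U) := by
    rw [hset]
    exact Real.volume_preimage_mul_left hβ _
  have hfin : volume (Icc a b ∩ U) ≠ ⊤ := by
    apply ne_top_of_le_ne_top _ (measure_mono inter_subset_left)
    rw [Real.volume_Icc]
    exact ENNReal.ofReal_ne_top
  set V := (volume (Icc a b ∩ U)).toReal with hVdef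
  have hVub : V ≤ (b - a + 1 + δ) * δ := by
    have := count_upper' a b c d hab hcd
    rw [← hUdef] at this
    calc V ≤ ((b - a + 1 + (d - c)) * (d - c)) :=
          ENNReal.toReal_le_of_le_ofReal (by nlinarith) this
      _ = (b - a + 1 + δ) * δ := by rw [hδdef]
  have hVlb : (b - a - 1 - δ) * δ ≤ V := by
    have := count_lower' a b c d hc0 hcd hd1
    rw [← hUdef] at this
    have h2 := (ENNReal.ofReal_le_iff_le_toReal hfin).1 this
    calc (b - a - 1 - δ) * δ = (b - a - 1 - (d - c)) * (d - c) := by rw [hδdef]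
      _ ≤ V := h2
  have hV0 : 0 ≤ V := ENNReal.toReal_nonneg
  -- final arithmetic
  rw [hvolA, ENNReal.toReal_mul, ENNReal.toReal_ofReal (abs_nonneg _), ← hVdef,
    hδtarget]
  have hβinv : |β⁻¹| = Real.log 10 / |α| := by
    rw [abs_inv, hβabs, inv_div]
  rw [hβinv]
  have hbalog : b - a = |α| / Real.log 10 * T := by rw [hba, hβabs]
  set k := Real.log 10 / |α| with hkdef
  have hkpos : 0 < k := by positivity
  have hkV : k * V ≤ δ * T + (1 + δ) * δ * k := by
    have h2 := mul_le_mul_of_nonneg_left hVub hkpos.le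
    rw [hbalog] at h2
    calc k * V ≤ k * ((|α| / Real.log 10 * T + 1 + δ) * δ) := h2
      _ = δ * T + (1 + δ) * δ * k := by
          rw [hkdef]; field_simp; ring
  have hkV' : δ * T - (1 + δ) * δ * k ≤ k * V := by
    have h2 := mul_le_mul_of_nonneg_left hVlb hkpos.le
    rw [hbalog] at h2
    calc δ * T - (1 + δ) * δ * k
        = k * ((|α| / Real.log 10 * T - 1 - δ) * δ) := by
          rw [hkdef]; field_simp; ring
      _ ≤ k * V := h2
  have hfrac : (1 + δ) * δ * k < 1 / |α| := by
    have he : (1 + δ) * δ * k = ((1 + δ) * δ * Real.log 10) / |α| := by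
      rw [hkdef]; ring
    have he2 : (1:ℝ) / |α| = 1 / |α| := rfl
    rw [he, div_lt_div_iff₀ hαpos hαpos]
    nlinarith
  rw [abs_sub_lt_iff]
  constructor
  · rw [sub_lt_iff_lt_add, div_lt_iff₀ hT]
    have hr : (1 / (|α| * T) + δ) * T = 1 / |α| + δ * T := by
      field_simp
    rw [hr]
    linarith
  · rw [sub_lt_iff_lt_add]
    have hr : 1 / (|α| * T) + k * V / T = (1 / |α| + k * V) / T := by
      field_simp
    rw [hr, lt_div_iff₀ hT]
    linarith
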